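/- There exists a constant d > 0, depending only on the channel W_{Z|X[K]}, such that for every (n, M₁,…,M_K, L₁,…,L_K) code the following holds. Let Xₖⁿ := f_k(W_k, S_k) be user k's random codeword (with the (W_k, S_k) independent and uniform), let Zⁿ be the warden's observation from n memoryless uses of W_{Z|X[K]}, let μ_{kj} := (M_k L_k)^{-1} Σ_{m,ℓ} 1{ (f_k(m,ℓ))_j = 1 } for j ∈ {1,…,n}, and μ_max := max_{k,j} μ_{kj}. Then I(X₁ⁿ,…,X_Kⁿ; Zⁿ) ≥ Σ_{j=1}^n Σ_{k=1}^K μ_{kj}·D(Q_k‖Q_∅) − d·μ_max·Σ_{k=1}^K Σ_{j=1}^n μ_{kj} − D(Q̂ⁿ‖Q_∅^{⊗n}). -/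

import Mathlib

open Finset Filter
open scoped Topology Classical

noncomputable section

/-- `P` is a probability distribution on the finite type `Z`. -/
def IsDist {Z : Type*} [Fintype Z] (P : Z → ℝ) : Prop :=
  (∀ z, 0 ≤ P z) ∧ ∑ z, P z = 1

/-- Kullback–Leibler divergence `D(P‖Q)` (natural logarithm). -/
def klDiv {Z : Type*} [Fintype Z] (P Q : Z → ℝ) : ℝ :=
  ∑ z, P z * Real.log (P z / Q z)

/-- `P` is absolutely continuous w.r.t. `Q`. -/
def AbsCont {Z : Type*} (P Q : Z → ℝ) : Prop :=
  ∀ z, Q z = 0 → P z = 0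

/-- The binary input vector having ones exactly at the indices in `U`. -/
def xU {K : ℕ} (U : Finset (Fin K)) : Fin K → Bool :=
  fun k => decide (k ∈ U)

/-- Bernoulli distribution on `Bool` with success probability `p`. -/
def bern (p : ℝ) : Bool → ℝ := fun b => if b then p else 1 - p

/-- `n`-fold memoryless extension of a channel `W`. -/
def prodChannel {A Z : Type*} (W : A → Z → ℝ) (n : ℕ)
    (x : Fin n → A) (z : Fin n → Z) : ℝ :=
  ∏ j, W (x j) (z j)

/-- `χ(ρ) := Σ_z (Σ_k ρ_k (Q_k(z) - Q_∅(z)))² / Q_∅(z)` for the warden channel `Wz`. -/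
def chiRho {K : ℕ} {Z : Type*} [Fintype Z] (Wz : (Fin K → Bool) → Z → ℝ)
    (ρ : Fin K → ℝ) : ℝ :=
  ∑ z, (∑ k, ρ k * (Wz (xU {k}) z - Wz (xU ∅) z)) ^ 2 / Wz (xU ∅) z

/-- The distribution `Q̂ⁿ` induced at the warden by a code with encoders `enc`, uniform
messages and uniform keys. -/
def Qhat {K n : ℕ} {Z : Type*} [Fintype Z] (Wz : (Fin K → Bool) → Z → ℝ)
    (M L : Fin K → ℕ) (enc : ∀ k, Fin (M k) × Fin (L k) → Fin n → Bool)
    (z : Fin n → Z) : ℝ :=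
  (∏ k, ((M k : ℝ) * (L k : ℝ)))⁻¹ *
    ∑ m : ∀ k, Fin (M k), ∑ l : ∀ k, Fin (L k),
      prodChannel Wz n (fun j k => enc k (m k, l k) j) z

/-- The average probability of decoding error of a code over the `n`-fold extension of
the channel `Wy`, with uniform messages and uniform keys. -/
def Pe {K n : ℕ} {Y : Type*} [Fintype Y] (Wy : (Fin K → Bool) → Y → ℝ)
    (M L : Fin K → ℕ) (enc : ∀ k, Fin (M k) × Fin (L k) → Fin n → Bool)
    (dec : (Fin n → Y) → (∀ k, Fin (L k)) → ∀ k, Fin (M k)) : ℝ :=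
  (∏ k, ((M k : ℝ) * (L k : ℝ)))⁻¹ *
    ∑ m : ∀ k, Fin (M k), ∑ l : ∀ k, Fin (L k), ∑ y : Fin n → Y,
      prodChannel Wy n (fun j k => enc k (m k, l k) j) y *
        (if dec y l = m then 0 else 1)

/-- `δₙ = D(Q̂ⁿ ‖ Q_∅^{⊗n})`. -/
def deltaN {K n : ℕ} {Z : Type*} [Fintype Z] (Wz : (Fin K → Bool) → Z → ℝ)
    (M L : Fin K → ℕ) (enc : ∀ k, Fin (M k) × Fin (L k) → Fin n → Bool) : ℝ :=
  klDiv (Qhat Wz M L enc) (fun z : Fin n → Z => ∏ j, Wz (xU ∅) (z j))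

/-- Mutual information `I(A;B)` of a finitely-supported joint distribution `p`. -/
def mutInfo {A B : Type*} [Fintype A] [Fintype B] (p : A → B → ℝ) : ℝ :=
  ∑ a, ∑ b, p a b * Real.log (p a b / ((∑ b', p a b') * (∑ a', p a' b)))

/-- Conditional mutual information `I(A;B|C)` of a finitely-supported joint
distribution `p`. -/
def condMutInfo {A B C : Type*} [Fintype A] [Fintype B] [Fintype C]
    (p : A → B → C → ℝ) : ℝ :=
  ∑ a, ∑ b, ∑ c, p a b c *
    Real.log (p a b c * (∑ a', ∑ b', p a' b' c) /
      ((∑ b', p a b' c) * (∑ a', p a' b c)))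

/-- Merge an assignment on the coordinates in `T` with one on the coordinates in `Tᶜ`. -/
def mergeT {K : ℕ} (T : Finset (Fin K)) (a : {i // i ∈ T} → Bool)
    (c : {i // i ∈ Tᶜ} → Bool) : Fin K → Bool :=
  fun i => if h : i ∈ T then a ⟨i, h⟩ else c ⟨i, Finset.mem_compl.mpr h⟩

/-- The channel `W_{Z|X[S]}` obtained from `W` by averaging the inputs outside `S`
according to the independent input distributions `π k`. -/
def margChannel {K : ℕ} {Z : Type*} [Fintype Z] (W : (Fin K → Bool) → Z → ℝ)
    (π : Fin K → Bool → ℝ) (S : Finset (Fin K))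
    (xs : {i // i ∈ S} → Bool) (z : Z) : ℝ :=
  ∑ c : {i // i ∈ Sᶜ} → Bool, (∏ i : {i // i ∈ Sᶜ}, π i.1 (c i)) * W (mergeT S xs c) z

/-- The distribution of user `k`'s random codeword (uniform message and key). -/
def cwDist {n M L : ℕ} (f : Fin M × Fin L → Fin n → Bool) (v : Fin n → Bool) : ℝ :=
  ((M : ℝ) * (L : ℝ))⁻¹ * ∑ p : Fin M × Fin L, (if f p = v then 1 else 0)

/-- `μ_{kj}`: the fraction of codewords of user `k` having a `1` in position `j`. -/
def muKJ {K n : ℕ} {M L : Fin K → ℕ} (f : ∀ k, Fin (M k) × Fin (L k) → Fin n → Bool)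
    (k : Fin K) (j : Fin n) : ℝ :=
  ((M k : ℝ) * (L k : ℝ))⁻¹ * ∑ p : Fin (M k) × Fin (L k), (if f k p j then 1 else 0)

lemma sum_pi_prod {ι : Type*} [Fintype ι] [DecidableEq ι] {β : ι → Type*} [∀ i, Fintype (β i)]
    (h : ∀ i, β i → ℝ) :
    ∑ z : ∀ i, β i, ∏ i, h i (z i) = ∏ i, ∑ t, h i t := by
  rw [Finset.prod_univ_sum, Fintype.piFinset_univ]

lemma klDiv_nonneg' {Z : Type*} [Fintype Z] {P Q : Z → ℝ} (hP : IsDist P) (hQ : IsDist Q)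
    (hAC : ∀ z, Q z = 0 → P z = 0) : 0 ≤ klDiv P Q := by
  have key : ∀ z, P z - Q z ≤ P z * Real.log (P z / Q z) := by
    intro z
    rcases eq_or_lt_of_le (hP.1 z) with h0 | hp
    · rw [← h0]; simp [hQ.1 z]
    · have hq : 0 < Q z := lt_of_le_of_ne (hQ.1 z) fun h => by
        have := hAC z h.symm; linarith
      have hlog : Real.log (Q z / P z) ≤ Q z / P z - 1 :=
        Real.log_le_sub_one_of_pos (by positivity)
      have hinv : Real.log (P z / Q z) = - Real.log (Q z / P z) := by
        rw [← Real.log_inv]; congr 1; field_simp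
      have h1 : P z * Real.log (Q z / P z) ≤ P z * (Q z / P z - 1) :=
        mul_le_mul_of_nonneg_left hlog hp.le
      have h2 : P z * (Q z / P z - 1) = Q z - P z := by field_simp
      rw [hinv]; nlinarith
  calc (0:ℝ) = ∑ z, (P z - Q z) := by rw [Finset.sum_sub_distrib, hP.2, hQ.2]; ring
  _ ≤ klDiv P Q := Finset.sum_le_sum fun z _ => key z

lemma one_sub_sum_le_prod {ι : Type*} (s : Finset ι) (a : ι → ℝ)
    (h0 : ∀ i ∈ s, 0 ≤ a i) (h1 : ∀ i ∈ s, a i ≤ 1) :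
    1 - ∑ i ∈ s, a i ≤ ∏ i ∈ s, (1 - a i) := by
  induction s using Finset.cons_induction with
  | empty => simp
  | cons i s hi ih =>
    rw [Finset.prod_cons, Finset.sum_cons]
    have hprod0 : 0 ≤ ∏ j ∈ s, (1 - a j) := Finset.prod_nonneg fun j hj => by
      have := h1 j (Finset.mem_cons_of_mem hj); linarith
    have hih := ih (fun j hj => h0 j (Finset.mem_cons_of_mem hj))
      (fun j hj => h1 j (Finset.mem_cons_of_mem hj))
    have hai0 := h0 i (Finset.mem_cons_self _ _)
    have hai1 := h1 i (Finset.mem_cons_self _ _)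
    have hs0 : 0 ≤ ∑ j ∈ s, a j := Finset.sum_nonneg fun j hj => h0 j (Finset.mem_cons_of_mem hj)
    nlinarith [mul_nonneg hai0 hs0, mul_nonneg (by linarith : (0:ℝ) ≤ 1 - a i)
      (by linarith : (0:ℝ) ≤ (∏ j ∈ s, (1 - a j)) - (1 - ∑ j ∈ s, a j))]

lemma sum_pi_mul_single {n : ℕ} {Z : Type*} [Fintype Z] (h : Fin n → Z → ℝ)
    (hnorm : ∀ i, ∑ t, h i t = 1) (j : Fin n) (g : Z → ℝ) :
    ∑ z : Fin n → Z, (∏ i, h i (z i)) * g (z j) = ∑ t, h j t * g t := by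
  set H : Fin n → Z → ℝ := fun i t => if i = j then h i t * g t else h i t with hH
  have key2 : ∀ z : Fin n → Z, (∏ i, h i (z i)) * g (z j) = ∏ i, H i (z i) := by
    intro z
    have h1 : ∏ i, H i (z i) = (h j (z j) * g (z j)) * ∏ i ∈ univ.erase j, h i (z i) := by
      rw [← Finset.mul_prod_erase univ (fun i => H i (z i)) (Finset.mem_univ j)]
      have hj : H j (z j) = h j (z j) * g (z j) := by simp [hH]
      rw [hj]
      congr 1
      exact Finset.prod_congr rfl fun i hi => by
        simp [hH, Finset.ne_of_mem_erase hi]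
    have h2 : ∏ i, h i (z i) = h j (z j) * ∏ i ∈ univ.erase j, h i (z i) :=
      (Finset.mul_prod_erase univ (fun i => h i (z i)) (Finset.mem_univ j)).symm
    rw [h1, h2]; ring
  calc ∑ z : Fin n → Z, (∏ i, h i (z i)) * g (z j)
      = ∑ z : Fin n → Z, ∏ i, H i (z i) := Finset.sum_congr rfl fun z _ => key2 z
    _ = ∏ i, ∑ t, H i t := sum_pi_prod H
    _ = ∑ t, h j t * g t := by
        rw [Finset.prod_eq_single j (fun i _ hij => by simp [hH, hij, hnorm i])
          (fun h => absurd (Finset.mem_univ j) h)]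
        simp [hH]

lemma klDiv_prodChannel {n : ℕ} {Z : Type*} [Fintype Z] (W : Fin n → Z → ℝ) (Q : Z → ℝ)
    (hW : ∀ j, IsDist (W j)) (hQ : ∀ j z, Q z = 0 → W j z = 0) :
    klDiv (fun z : Fin n → Z => ∏ j, W j (z j)) (fun z : Fin n → Z => ∏ j, Q (z j))
      = ∑ j, klDiv (W j) Q := by
  unfold klDiv
  have key : ∀ z : Fin n → Z, (∏ j, W j (z j)) * Real.log ((∏ j, W j (z j)) / ∏ j, Q (z j))
      = ∑ j, (∏ i, W i (z i)) * Real.log (W j (z j) / Q (z j)) := by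
    intro z
    by_cases hz : ∏ j, W j (z j) = 0
    · rw [hz]; simp
    · have hWpos : ∀ j, W j (z j) ≠ 0 := fun j h =>
        hz (Finset.prod_eq_zero (Finset.mem_univ j) h)
      have hQpos : ∀ j, Q (z j) ≠ 0 := fun j h => hWpos j (hQ j _ h)
      rw [← Finset.prod_div_distrib,
        Real.log_prod (fun j _ => div_ne_zero (hWpos j) (hQpos j)), Finset.mul_sum]
  rw [Finset.sum_congr rfl fun z _ => key z, Finset.sum_comm]
  exact Finset.sum_congr rfl fun j _ =>
    sum_pi_mul_single W (fun i => (hW i).2) j (fun t => Real.log (W j t / Q t))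

lemma mutInfo_decomp {A B : Type*} [Fintype A] [Fintype B] (p : A → B → ℝ)
    (P : A → ℝ) (W : A → B → ℝ) (Q : B → ℝ)
    (hp : ∀ a b, p a b = P a * W a b)
    (hPnn : ∀ a, 0 ≤ P a) (hWnn : ∀ a b, 0 ≤ W a b)
    (hWsum : ∀ a, ∑ b, W a b = 1)
    (hQW : ∀ a b, Q b = 0 → W a b = 0) :
    mutInfo p = (∑ a, P a * klDiv (W a) Q) - klDiv (fun b => ∑ a, p a b) Q := by
  unfold mutInfo klDiv
  have hm1 : ∀ a, ∑ b, p a b = P a := fun a => by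
    simp only [hp]; rw [← Finset.mul_sum, hWsum a, mul_one]
  have key : ∀ a b, p a b * Real.log (p a b / ((∑ b', p a b') * (∑ a', p a' b)))
      = P a * (W a b * Real.log (W a b / Q b))
        - p a b * Real.log ((∑ a', p a' b) / Q b) := by
    intro a b
    rw [hm1 a]
    by_cases hz : p a b = 0
    · rcases mul_eq_zero.mp (hp a b ▸ hz) with h | h
      · simp [hz, hp, h]
      · simp [hz, hp a b, h]
    · have hpnn : 0 < p a b := lt_of_le_of_ne (by rw [hp]; exact mul_nonneg (hPnn a) (hWnn a b)) (Ne.symm hz)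
      have hPa : 0 < P a := by
        rcases (hPnn a).lt_or_eq with h | h; · exact h
        · exfalso; apply hz; rw [hp, ← h]; ring
      have hWab : 0 < W a b := by
        rcases (hWnn a b).lt_or_eq with h | h; · exact h
        · exfalso; apply hz; rw [hp, ← h]; ring
      have hQb : Q b ≠ 0 := fun h => by
        have := hQW a b h; rw [this] at hWab; exact lt_irrefl _ hWab
      have hQhb : 0 < ∑ a', p a' b :=
        lt_of_lt_of_le hpnn (Finset.single_le_sum (f := fun a' => p a' b)
          (fun a' _ => by show (0:ℝ) ≤ p a' b; rw [hp]; exact mul_nonneg (hPnn a') (hWnn a' b)) (Finset.mem_univ a))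
      have h1 : p a b / (P a * ∑ a', p a' b) = W a b / (∑ a', p a' b) := by
        rw [hp]; rw [mul_div_mul_left _ _ hPa.ne']
      rw [h1, Real.log_div hWab.ne' hQhb.ne', Real.log_div hWab.ne' hQb,
        Real.log_div hQhb.ne' hQb, hp]
      ring
  rw [Finset.sum_congr rfl fun a _ => Finset.sum_congr rfl fun b _ => key a b]
  rw [Finset.sum_congr rfl fun a _ => Finset.sum_sub_distrib _ _, Finset.sum_sub_distrib]
  congr 1
  · exact Finset.sum_congr rfl fun a _ => by rw [← Finset.mul_sum]
  · rw [Finset.sum_comm]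
    exact Finset.sum_congr rfl fun b _ => by rw [← Finset.sum_mul]

lemma cwDist_nonneg {n M L : ℕ} (f : Fin M × Fin L → Fin n → Bool) (v : Fin n → Bool) :
    0 ≤ cwDist f v :=
  mul_nonneg (inv_nonneg.mpr (by positivity))
    (Finset.sum_nonneg fun p _ => by split <;> norm_num)

lemma cwDist_sum {n M L : ℕ} (hM : 0 < M) (hL : 0 < L) (f : Fin M × Fin L → Fin n → Bool) :
    ∑ v, cwDist f v = 1 := by
  unfold cwDist
  rw [← Finset.mul_sum, Finset.sum_comm]
  have h1 : ∀ p : Fin M × Fin L, ∑ v : Fin n → Bool, (if f p = v then (1:ℝ) else 0) = 1 := by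
    intro p; rw [Finset.sum_ite_eq]; simp
  rw [Finset.sum_congr rfl fun p _ => h1 p, Finset.sum_const, Finset.card_univ]
  have hML : ((M:ℝ) * (L:ℝ)) ≠ 0 := by
    have h1 : (0:ℝ) < (M:ℝ) := by exact_mod_cast hM
    have h2 : (0:ℝ) < (L:ℝ) := by exact_mod_cast hL
    positivity
  simp [Fintype.card_prod]
  field_simp

lemma muKJ_mem {K n : ℕ} {M L : Fin K → ℕ} (hM : ∀ k, 0 < M k) (hL : ∀ k, 0 < L k)
    (f : ∀ k, Fin (M k) × Fin (L k) → Fin n → Bool) (k : Fin K) (j : Fin n) :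
    0 ≤ muKJ f k j ∧ muKJ f k j ≤ 1 := by
  have h1 : (0:ℝ) < (M k:ℝ) := by exact_mod_cast hM k
  have h2 : (0:ℝ) < (L k:ℝ) := by exact_mod_cast hL k
  have hMLpos : (0:ℝ) < (M k : ℝ) * (L k : ℝ) := by positivity
  constructor
  · exact mul_nonneg (inv_nonneg.mpr hMLpos.le)
      (Finset.sum_nonneg fun p _ => by split <;> norm_num)
  · have hS : ∑ p : Fin (M k) × Fin (L k), (if f k p j then (1:ℝ) else 0)
        ≤ ∑ _p : Fin (M k) × Fin (L k), (1:ℝ) :=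
      Finset.sum_le_sum fun p _ => by split <;> norm_num
    have hcard : ∑ _p : Fin (M k) × Fin (L k), (1:ℝ) = (M k:ℝ) * (L k:ℝ) := by
      rw [Finset.sum_const, Finset.card_univ]
      simp [Fintype.card_prod]
    calc muKJ f k j ≤ ((M k:ℝ) * (L k:ℝ))⁻¹ * ((M k:ℝ) * (L k:ℝ)) := by
          unfold muKJ
          exact mul_le_mul_of_nonneg_left (hcard ▸ hS) (inv_nonneg.mpr hMLpos.le)
      _ = 1 := inv_mul_cancel₀ hMLpos.ne'

lemma cwDist_marginal {n M L : ℕ} (hM : 0 < M) (hL : 0 < L)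
    (f : Fin M × Fin L → Fin n → Bool) (j : Fin n) (b : Bool) :
    ∑ u : Fin n → Bool, cwDist f u * (if u j = b then 1 else 0)
      = bern (((M : ℝ) * (L : ℝ))⁻¹ * ∑ p : Fin M × Fin L, (if f p j then 1 else 0)) b := by
  have htrue : ∑ u : Fin n → Bool, cwDist f u * (if u j = true then (1:ℝ) else 0)
      = ((M : ℝ) * (L : ℝ))⁻¹ * ∑ p : Fin M × Fin L, (if f p j then 1 else 0) := by
    unfold cwDist
    simp only [mul_assoc]
    rw [← Finset.mul_sum]
    congr 1
    calc ∑ u : Fin n → Bool, (∑ p : Fin M × Fin L, (if f p = u then (1:ℝ) else 0))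
            * (if u j = true then (1:ℝ) else 0)
        = ∑ p : Fin M × Fin L, ∑ u : Fin n → Bool,
            (if f p = u then (if u j = true then (1:ℝ) else 0) else 0) := by
          have hre : ∀ u : Fin n → Bool, (∑ p : Fin M × Fin L, (if f p = u then (1:ℝ) else 0))
              * (if u j = true then (1:ℝ) else 0)
              = ∑ p : Fin M × Fin L, (if f p = u then (if u j = true then (1:ℝ) else 0) else 0) := by
            intro u
            rw [Finset.sum_mul]
            exact Finset.sum_congr rfl fun p _ => by rw [ite_mul, one_mul, zero_mul]
          rw [Finset.sum_congr rfl fun u _ => hre u, Finset.sum_comm]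
      _ = ∑ p : Fin M × Fin L, (if f p j then (1:ℝ) else 0) := by
          refine Finset.sum_congr rfl fun p _ => ?_
          rw [Finset.sum_ite_eq]
          simp
  cases b with
  | true => rw [htrue]; simp [bern]
  | false =>
    have hsum := cwDist_sum hM hL f
    have hsplit : ∀ u : Fin n → Bool,
        (if u j = false then (1:ℝ) else 0) = 1 - (if u j = true then 1 else 0) := by
      intro u; cases h : u j <;> simp [h]
    calc ∑ u : Fin n → Bool, cwDist f u * (if u j = false then (1:ℝ) else 0)
        = ∑ u : Fin n → Bool, (cwDist f u - cwDist f u * (if u j = true then (1:ℝ) else 0)) := by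
          refine Finset.sum_congr rfl fun u _ => ?_
          rw [hsplit u]; ring
      _ = 1 - ((M : ℝ) * (L : ℝ))⁻¹ * ∑ p : Fin M × Fin L, (if f p j then (1:ℝ) else 0) := by
          rw [Finset.sum_sub_distrib, hsum, htrue]
      _ = bern _ false := by simp [bern]

lemma sum_P_Wn {K n : ℕ} {Z : Type*} [Fintype Z] (Wz : (Fin K → Bool) → Z → ℝ)
    (M L : Fin K → ℕ) (f : ∀ k, Fin (M k) × Fin (L k) → Fin n → Bool) (z : Fin n → Z) :
    ∑ x : Fin K → Fin n → Bool,
        (∏ k, cwDist (f k) (x k)) * prodChannel Wz n (fun j k => x k j) z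
      = Qhat Wz M L f z := by
  have hexp : ∀ x : Fin K → Fin n → Bool, (∏ k, cwDist (f k) (x k))
      = (∏ k, ((M k:ℝ) * (L k:ℝ)))⁻¹ * ∑ m : ∀ k, Fin (M k), ∑ l : ∀ k, Fin (L k),
          ∏ k, (if f k (m k, l k) = x k then (1:ℝ) else 0) := by
    intro x
    unfold cwDist
    rw [Finset.prod_mul_distrib, ← Finset.prod_inv_distrib]
    congr 1
    have h1 : ∀ k, (∑ p : Fin (M k) × Fin (L k), (if f k p = x k then (1:ℝ) else 0))
        = ∑ a : Fin (M k), ∑ b : Fin (L k), (if f k (a, b) = x k then (1:ℝ) else 0) := by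
      intro k; rw [Fintype.sum_prod_type]
    rw [Finset.prod_congr rfl fun k _ => h1 k]
    calc ∏ k, ∑ a : Fin (M k), ∑ b : Fin (L k), (if f k (a, b) = x k then (1:ℝ) else 0)
        = ∑ m : ∀ k, Fin (M k), ∏ k, ∑ b : Fin (L k), (if f k (m k, b) = x k then (1:ℝ) else 0) :=
          (sum_pi_prod (fun k a => ∑ b : Fin (L k), (if f k (a, b) = x k then (1:ℝ) else 0))).symm
      _ = ∑ m : ∀ k, Fin (M k), ∑ l : ∀ k, Fin (L k),
            ∏ k, (if f k (m k, l k) = x k then (1:ℝ) else 0) :=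
          Finset.sum_congr rfl fun m _ =>
            (sum_pi_prod (fun k b => (if f k (m k, b) = x k then (1:ℝ) else 0))).symm
  have hind : ∀ (m : ∀ k, Fin (M k)) (l : ∀ k, Fin (L k)) (x : Fin K → Fin n → Bool),
      (∏ k, (if f k (m k, l k) = x k then (1:ℝ) else 0)) * prodChannel Wz n (fun j k => x k j) z
        = if (fun k => f k (m k, l k)) = x then prodChannel Wz n (fun j k => x k j) z else 0 := by
    intro m l x
    by_cases h : (fun k => f k (m k, l k)) = x
    · rw [if_pos h, Finset.prod_eq_one fun k _ => if_pos (congrFun h k), one_mul]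
    · rw [if_neg h]
      have hex : ∃ k, f k (m k, l k) ≠ x k := by
        by_contra hc; push_neg at hc; exact h (funext hc)
      obtain ⟨k, hk⟩ := hex
      rw [Finset.prod_eq_zero (Finset.mem_univ k) (if_neg hk : (if f k (m k, l k) = x k then (1:ℝ) else 0) = 0), zero_mul]
  calc ∑ x : Fin K → Fin n → Bool,
        (∏ k, cwDist (f k) (x k)) * prodChannel Wz n (fun j k => x k j) z
      = (∏ k, ((M k:ℝ) * (L k:ℝ)))⁻¹ * ∑ x : Fin K → Fin n → Bool,
          ∑ m : ∀ k, Fin (M k), ∑ l : ∀ k, Fin (L k),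
          (∏ k, (if f k (m k, l k) = x k then (1:ℝ) else 0))
            * prodChannel Wz n (fun j k => x k j) z := by
        rw [Finset.mul_sum]
        refine Finset.sum_congr rfl fun x _ => ?_
        rw [hexp x, mul_assoc]
        congr 1
        rw [Finset.sum_mul]
        exact Finset.sum_congr rfl fun m _ => Finset.sum_mul _ _ _
    _ = (∏ k, ((M k:ℝ) * (L k:ℝ)))⁻¹ * ∑ m : ∀ k, Fin (M k), ∑ l : ∀ k, Fin (L k),
          ∑ x : Fin K → Fin n → Bool,
          (∏ k, (if f k (m k, l k) = x k then (1:ℝ) else 0))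
            * prodChannel Wz n (fun j k => x k j) z := by
        congr 1
        rw [Finset.sum_comm]
        exact Finset.sum_congr rfl fun m _ => Finset.sum_comm
    _ = (∏ k, ((M k:ℝ) * (L k:ℝ)))⁻¹ * ∑ m : ∀ k, Fin (M k), ∑ l : ∀ k, Fin (L k),
          prodChannel Wz n (fun j k => f k (m k, l k) j) z := by
        congr 1
        refine Finset.sum_congr rfl fun m _ => Finset.sum_congr rfl fun l _ => ?_
        rw [Finset.sum_congr rfl fun x _ => hind m l x, Finset.sum_ite_eq]
        simp
    _ = Qhat Wz M L f z := rfl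

lemma coord_marginal {K n : ℕ} {Z : Type*} [Fintype Z] {M L : Fin K → ℕ}
    (hM : ∀ k, 0 < M k) (hL : ∀ k, 0 < L k)
    (f : ∀ k, Fin (M k) × Fin (L k) → Fin n → Bool) (j : Fin n) (g : (Fin K → Bool) → ℝ) :
    ∑ x : Fin K → Fin n → Bool, (∏ k, cwDist (f k) (x k)) * g (fun k => x k j)
      = ∑ v : Fin K → Bool, (∏ k, bern (muKJ f k j) (v k)) * g v := by
  have hprodite : ∀ (x : Fin K → Fin n → Bool) (v : Fin K → Bool),
      (∏ k, (if x k j = v k then (1:ℝ) else 0)) = if (fun k => x k j) = v then (1:ℝ) else 0 := by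
    intro x v
    by_cases h : (fun k => x k j) = v
    · rw [if_pos h]; exact Finset.prod_eq_one fun k _ => if_pos (congrFun h k)
    · rw [if_neg h]
      have hex : ∃ k, x k j ≠ v k := by
        by_contra hc; push_neg at hc; exact h (funext hc)
      obtain ⟨k, hk⟩ := hex
      exact Finset.prod_eq_zero (Finset.mem_univ k) (if_neg hk : (if x k j = v k then (1:ℝ) else 0) = 0)
  have step1 : ∀ x : Fin K → Fin n → Bool, (∏ k, cwDist (f k) (x k)) * g (fun k => x k j)
      = ∑ v : Fin K → Bool,
          (∏ k, cwDist (f k) (x k) * (if x k j = v k then (1:ℝ) else 0)) * g v := by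
    intro x
    calc (∏ k, cwDist (f k) (x k)) * g (fun k => x k j)
        = (∏ k, cwDist (f k) (x k)) * ∑ v : Fin K → Bool,
            (if (fun k => x k j) = v then (1:ℝ) else 0) * g v := by
          congr 1
          symm
          rw [Finset.sum_congr rfl fun v _ => by rw [ite_mul, one_mul, zero_mul],
            Finset.sum_ite_eq]
          simp
      _ = ∑ v : Fin K → Bool,
            (∏ k, cwDist (f k) (x k) * (if x k j = v k then (1:ℝ) else 0)) * g v := by
          rw [Finset.mul_sum]
          refine Finset.sum_congr rfl fun v _ => ?_
          rw [Finset.prod_mul_distrib, hprodite x v]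
          ring
  rw [Finset.sum_congr rfl fun x _ => step1 x, Finset.sum_comm]
  refine Finset.sum_congr rfl fun v _ => ?_
  rw [← Finset.sum_mul]
  congr 1
  calc ∑ x : Fin K → Fin n → Bool, ∏ k, (cwDist (f k) (x k) * (if x k j = v k then (1:ℝ) else 0))
      = ∏ k, ∑ u : Fin n → Bool, cwDist (f k) u * (if u j = v k then (1:ℝ) else 0) :=
        sum_pi_prod (fun k u => cwDist (f k) u * (if u j = v k then (1:ℝ) else 0))
    _ = ∏ k, bern (muKJ f k j) (v k) := Finset.prod_congr rfl fun k _ => by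
        rw [cwDist_marginal (hM k) (hL k) (f k) j (v k)]; rfl

/-- lower bound on `I(X₁ⁿ,…,X_Kⁿ; Zⁿ)` for any code, where the codewords
`Xₖⁿ` are independent with distributions `cwDist (f k)` and `Zⁿ` is produced by `n`
memoryless uses of `Wz`. -/
theorem mutInfo_warden_lower_bound (K : ℕ) (hK : 2 ≤ K) {Z : Type*} [Fintype Z]
    (Wz : (Fin K → Bool) → Z → ℝ) (hWz : ∀ x, IsDist (Wz x))
    (hACz : ∀ U : Finset (Fin K), U.Nonempty → AbsCont (Wz (xU U)) (Wz (xU ∅))) :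
    ∃ d > 0, ∀ (n : ℕ), 0 < n → ∀ (M L : Fin K → ℕ), (∀ k, 0 < M k) → (∀ k, 0 < L k) →
      ∀ f : ∀ k, Fin (M k) × Fin (L k) → Fin n → Bool,
        (∑ j, ∑ k, muKJ f k j * klDiv (Wz (xU {k})) (Wz (xU ∅))) -
            d * (⨆ k, ⨆ j, muKJ f k j) * (∑ k, ∑ j, muKJ f k j) -
            klDiv (Qhat Wz M L f) (fun z : Fin n → Z => ∏ j, Wz (xU ∅) (z j)) ≤
          mutInfo (fun (x : Fin K → Fin n → Bool) (z : Fin n → Z) =>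
            (∏ k, cwDist (f k) (x k)) * prodChannel Wz n (fun j k => x k j) z) := by
  classical
  have hxrep : ∀ x : Fin K → Bool, x = xU (Finset.univ.filter fun k => x k = true) := by
    intro x; funext k; simp [xU]
  have hAC : ∀ (x : Fin K → Bool) (z : Z), Wz (xU ∅) z = 0 → Wz x z = 0 := by
    intro x z hz
    by_cases hx : (Finset.univ.filter fun k => x k = true).Nonempty
    · have h := hACz _ hx z hz
      rwa [← hxrep x] at h
    · rw [Finset.not_nonempty_iff_eq_empty] at hx
      rw [hxrep x, hx]; exact hz
  have hsing : ∀ v : Fin K → Bool, 0 ≤ klDiv (Wz v) (Wz (xU ∅)) := fun v =>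
    klDiv_nonneg' (hWz v) (hWz _) (fun z hz => hAC v z hz)
  set C : ℝ := ∑ k : Fin K, klDiv (Wz (xU {k})) (Wz (xU ∅)) with hCdef
  have hC0 : 0 ≤ C := by
    rw [hCdef]; exact Finset.sum_nonneg fun k _ => hsing _
  have hDleC : ∀ k : Fin K, klDiv (Wz (xU {k})) (Wz (xU ∅)) ≤ C := by
    intro k; rw [hCdef]
    exact Finset.single_le_sum (f := fun i : Fin K => klDiv (Wz (xU {i})) (Wz (xU ∅)))
      (fun i _ => hsing _) (Finset.mem_univ k)
  have hK1 : (1:ℝ) ≤ (K:ℝ) - 1 := by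
    have : (2:ℝ) ≤ (K:ℝ) := by exact_mod_cast hK
    linarith
  refine ⟨((K:ℝ) - 1) * C + 1, by nlinarith, ?_⟩
  intro n hn M L hM hL f
  have hmu0 : ∀ (k : Fin K) (j : Fin n), 0 ≤ muKJ f k j := fun k j => (muKJ_mem hM hL f k j).1
  have hmu1 : ∀ (k : Fin K) (j : Fin n), muKJ f k j ≤ 1 := fun k j => (muKJ_mem hM hL f k j).2
  set mu : ℝ := ⨆ k, ⨆ j, muKJ f k j with hmudef
  have hle_mu : ∀ k j, muKJ f k j ≤ mu := by
    intro k j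
    have h1 : muKJ f k j ≤ ⨆ j, muKJ f k j :=
      le_ciSup (Set.Finite.bddAbove (Set.finite_range _)) j
    refine h1.trans ?_
    rw [hmudef]
    exact le_ciSup (f := fun k => ⨆ j, muKJ f k j)
      (Set.Finite.bddAbove (Set.finite_range _)) k
  have hK0 : 0 < K := by omega
  have hmu_nn : 0 ≤ mu := le_trans (hmu0 ⟨0, hK0⟩ ⟨0, hn⟩) (hle_mu _ _)
  have hbern_nn : ∀ (k : Fin K) (j : Fin n) (b : Bool), 0 ≤ bern (muKJ f k j) b := by
    intro k j b
    cases b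
    · simp only [bern, if_neg Bool.false_ne_true]
      linarith [hmu1 k j]
    · simp only [bern, if_pos rfl]
      exact hmu0 k j
  have hdecomp := mutInfo_decomp
    (fun (x : Fin K → Fin n → Bool) (z : Fin n → Z) =>
      (∏ k, cwDist (f k) (x k)) * prodChannel Wz n (fun j k => x k j) z)
    (fun x => ∏ k, cwDist (f k) (x k))
    (fun x z => prodChannel Wz n (fun j k => x k j) z)
    (fun z => ∏ j, Wz (xU ∅) (z j))
    (fun a b => rfl)
    (fun x => Finset.prod_nonneg fun k _ => cwDist_nonneg (f k) (x k))
    (fun x z => Finset.prod_nonneg fun j _ => (hWz _).1 _)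
    (fun x => by
      show ∑ z : Fin n → Z, ∏ j, Wz (fun k => x k j) (z j) = 1
      rw [sum_pi_prod (fun j t => Wz (fun k => x k j) t)]
      exact Finset.prod_eq_one fun j _ => (hWz _).2)
    (fun x z hz => by
      show ∏ j, Wz (fun k => x k j) (z j) = 0
      have hz' : ∏ j, Wz (xU ∅) (z j) = 0 := hz
      obtain ⟨j, _, hj⟩ := Finset.prod_eq_zero_iff.mp hz'
      exact Finset.prod_eq_zero (Finset.mem_univ j) (hAC _ _ hj))
  rw [hdecomp]
  have hQhat_eq : (fun z : Fin n → Z => ∑ x : Fin K → Fin n → Bool,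
      (∏ k, cwDist (f k) (x k)) * prodChannel Wz n (fun j k => x k j) z) = Qhat Wz M L f :=
    funext fun z => sum_P_Wn Wz M L f z
  rw [hQhat_eq]
  have hsum_eq : ∑ x : Fin K → Fin n → Bool, (∏ k, cwDist (f k) (x k)) *
      klDiv (fun z : Fin n → Z => prodChannel Wz n (fun j k => x k j) z)
        (fun z : Fin n → Z => ∏ j, Wz (xU ∅) (z j))
      = ∑ j, ∑ v : Fin K → Bool,
          (∏ k, bern (muKJ f k j) (v k)) * klDiv (Wz v) (Wz (xU ∅)) := by
    have h1 : ∀ x : Fin K → Fin n → Bool,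
        klDiv (fun z : Fin n → Z => prodChannel Wz n (fun j k => x k j) z)
          (fun z : Fin n → Z => ∏ j, Wz (xU ∅) (z j))
          = ∑ j, klDiv (Wz (fun k => x k j)) (Wz (xU ∅)) :=
      fun x => klDiv_prodChannel (fun j => Wz (fun k => x k j)) (Wz (xU ∅))
        (fun j => hWz _) (fun j z hz => hAC _ _ hz)
    calc ∑ x : Fin K → Fin n → Bool, (∏ k, cwDist (f k) (x k)) *
        klDiv (fun z : Fin n → Z => prodChannel Wz n (fun j k => x k j) z)
          (fun z : Fin n → Z => ∏ j, Wz (xU ∅) (z j))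
        = ∑ x : Fin K → Fin n → Bool, ∑ j,
            (∏ k, cwDist (f k) (x k)) * klDiv (Wz (fun k => x k j)) (Wz (xU ∅)) :=
          Finset.sum_congr rfl fun x _ => by rw [h1 x, Finset.mul_sum]
      _ = ∑ j, ∑ x : Fin K → Fin n → Bool,
            (∏ k, cwDist (f k) (x k)) * klDiv (Wz (fun k => x k j)) (Wz (xU ∅)) :=
          by exact Finset.sum_comm
      _ = ∑ j, ∑ v : Fin K → Bool,
            (∏ k, bern (muKJ f k j) (v k)) * klDiv (Wz v) (Wz (xU ∅)) := by
          refine Finset.sum_congr rfl fun j _ => ?_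
          exact coord_marginal (Z := Z) hM hL f j (fun v => klDiv (Wz v) (Wz (xU ∅)))
  rw [hsum_eq]
  have hstep : ∀ j : Fin n, ∑ k, (muKJ f k j * klDiv (Wz (xU {k})) (Wz (xU ∅))
        - ((K:ℝ) - 1) * C * mu * muKJ f k j)
      ≤ ∑ v : Fin K → Bool, (∏ k, bern (muKJ f k j) (v k)) * klDiv (Wz v) (Wz (xU ∅)) := by
    intro j
    have he_inj : ∀ k1 ∈ (univ : Finset (Fin K)), ∀ k2 ∈ (univ : Finset (Fin K)),
        xU {k1} = xU {k2} → k1 = k2 := by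
      intro k1 _ k2 _ h
      have h2 := congrFun h k1
      simp [xU] at h2
      exact h2
    calc ∑ k, (muKJ f k j * klDiv (Wz (xU {k})) (Wz (xU ∅))
            - ((K:ℝ) - 1) * C * mu * muKJ f k j)
        ≤ ∑ k, (∏ k', bern (muKJ f k' j) (xU {k} k')) * klDiv (Wz (xU {k})) (Wz (xU ∅)) := by
          apply Finset.sum_le_sum
          intro k _
          have hcoef : ∏ k', bern (muKJ f k' j) (xU {k} k')
              = muKJ f k j * ∏ k' ∈ univ.erase k, (1 - muKJ f k' j) := by
            rw [← Finset.mul_prod_erase univ (fun k' => bern (muKJ f k' j) (xU {k} k'))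
              (Finset.mem_univ k)]
            have h3 : xU {k} k = true := by simp [xU]
            have h4 : ∀ k' ∈ univ.erase k, bern (muKJ f k' j) (xU {k} k')
                = 1 - muKJ f k' j := by
              intro k' hk'
              have h5 : xU {k} k' = false := by
                simp [xU]
                exact Finset.ne_of_mem_erase hk'
              rw [h5]
              simp [bern]
            rw [Finset.prod_congr rfl h4]
            simp [h3, bern]
          rw [hcoef]
          have hPrS : 1 - ∑ k' ∈ univ.erase k, muKJ f k' j
              ≤ ∏ k' ∈ univ.erase k, (1 - muKJ f k' j) :=
            one_sub_sum_le_prod _ _ (fun i _ => hmu0 i j) (fun i _ => hmu1 i j)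
          have hS0 : 0 ≤ ∑ k' ∈ univ.erase k, muKJ f k' j :=
            Finset.sum_nonneg fun i _ => hmu0 i j
          have hSle : ∑ k' ∈ univ.erase k, muKJ f k' j ≤ ((K:ℝ) - 1) * mu := by
            calc ∑ k' ∈ univ.erase k, muKJ f k' j ≤ ∑ _k' ∈ univ.erase k, mu :=
                Finset.sum_le_sum fun i _ => hle_mu i j
              _ = ((univ.erase k).card : ℝ) * mu := by rw [Finset.sum_const, nsmul_eq_mul]
              _ = ((K:ℝ) - 1) * mu := by
                  rw [Finset.card_erase_of_mem (Finset.mem_univ k), Finset.card_univ,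
                    Fintype.card_fin]
                  congr 1
                  rw [Nat.cast_sub (by omega)]
                  norm_num
          have hDk0 := hsing (xU {k})
          have hDkC := hDleC k
          have hmuk := hmu0 k j
          nlinarith [mul_le_mul_of_nonneg_left
              (mul_le_mul hSle hDkC hDk0 (mul_nonneg (by linarith) hmu_nn)) hmuk,
            mul_le_mul_of_nonneg_left (mul_le_mul_of_nonneg_right hPrS hDk0) hmuk]
      _ = ∑ v ∈ Finset.image (fun k : Fin K => xU {k}) univ,
            (∏ k', bern (muKJ f k' j) (v k')) * klDiv (Wz v) (Wz (xU ∅)) :=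
          (Finset.sum_image (f := fun v => (∏ k', bern (muKJ f k' j) (v k'))
            * klDiv (Wz v) (Wz (xU ∅))) he_inj).symm
      _ ≤ ∑ v : Fin K → Bool, (∏ k', bern (muKJ f k' j) (v k')) * klDiv (Wz v) (Wz (xU ∅)) :=
          Finset.sum_le_sum_of_subset_of_nonneg (Finset.subset_univ _)
            (fun v _ _ => mul_nonneg (Finset.prod_nonneg fun k' _ => hbern_nn k' j (v k'))
              (hsing v))
  have hfinal : ∑ j, ∑ k, (muKJ f k j * klDiv (Wz (xU {k})) (Wz (xU ∅))
        - ((K:ℝ) - 1) * C * mu * muKJ f k j)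
      ≤ ∑ j, ∑ v : Fin K → Bool,
          (∏ k, bern (muKJ f k j) (v k)) * klDiv (Wz v) (Wz (xU ∅)) :=
    Finset.sum_le_sum fun j _ => hstep j
  have hL1 : ∑ j, ∑ k, (muKJ f k j * klDiv (Wz (xU {k})) (Wz (xU ∅))
        - ((K:ℝ) - 1) * C * mu * muKJ f k j)
      = (∑ j, ∑ k, muKJ f k j * klDiv (Wz (xU {k})) (Wz (xU ∅)))
        - ((K:ℝ) - 1) * C * mu * (∑ k, ∑ j, muKJ f k j) := by
    rw [Finset.sum_congr rfl fun j _ => Finset.sum_sub_distrib _ _, Finset.sum_sub_distrib]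
    congr 1
    rw [Finset.sum_congr rfl fun j (_ : j ∈ univ) => (Finset.mul_sum _ _ _).symm,
      ← Finset.mul_sum, Finset.sum_comm]
  have hS2 : 0 ≤ ∑ k, ∑ j, muKJ f k j :=
    Finset.sum_nonneg fun k _ => Finset.sum_nonneg fun j _ => hmu0 k j
  rw [hL1] at hfinal
  nlinarith [mul_nonneg hmu_nn hS2]
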